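/- Fix α > 1, σ > 0, a > 0 and reals θ, c, and define Δ(u) = Φ((a−u)/σ) − Φ((−a−u)/σ). Let μ be the pushforward of the Gaussian measure N(θ, σ²) on ℝ under the clamping map x ↦ max(−a, min(a, x)), and let ν be the pushforward of N(θ+c, σ²) under the same map (these are the rectified Gaussians N^R(θ,σ²,[−a,a]) and N^R(θ+c,σ²,[−a,a])). Then μ is absolutely continuous with respect to ν and the Rényi divergence of order α satisfies (1/(α−1)) · log ∫ (dμ/dν)^α dν = (1/(α−1)) · log( exp((α²−α)c²/(2σ²)) · Δ(θ + (1−α)c) + Φ((−a−θ)/σ)^α · Φ((−a−θ−c)/σ)^{1−α} + Φ((θ−a)/σ)^α · Φ((θ+c−a)/σ)^{1−α} ). -/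

import Mathlib

open MeasureTheory Real Filter
open scoped ENNReal NNReal

/-- Standard Gaussian density. -/
noncomputable def phi (x : ℝ) : ℝ := (Real.sqrt (2 * Real.pi))⁻¹ * Real.exp (-(x ^ 2) / 2)

/-- Standard Gaussian cumulative distribution function. -/
noncomputable def Phi (x : ℝ) : ℝ := ∫ t in Set.Iic x, phi t

open ProbabilityTheory

/-- Mass of the Gaussian `N(u, σ²)` on `[−a, a]`. -/
noncomputable def Δ (a σ u : ℝ) : ℝ := Phi ((a - u) / σ) - Phi ((-a - u) / σ)


lemma phi_eq (x : ℝ) : gaussianPDFReal 0 1 x = phi x := by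
  simp [gaussianPDFReal, phi]

lemma std_Iic (y : ℝ) :
    gaussianReal 0 1 (Set.Iic y) = ENNReal.ofReal (Phi y) := by
  rw [gaussianReal_apply_eq_integral 0 one_ne_zero]
  simp_rw [phi_eq]
  rfl

lemma Phi_pos (x : ℝ) : 0 < Phi x := by
  rw [Phi, setIntegral_pos_iff_support_of_nonneg_ae]
  · have : Function.support phi = Set.univ := by
      ext t
      simp only [Function.mem_support, Set.mem_univ, iff_true]
      have : 0 < phi t := by
        rw [phi]; positivity
      exact this.ne'
    rw [this, Set.univ_inter]
    simp
  · exact Filter.Eventually.of_forall (fun t => by rw [phi]; positivity)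
  · have : Integrable phi := by
      simpa [funext phi_eq] using integrable_gaussianPDFReal 0 1
    exact this.integrableOn

lemma Phi_mono : Monotone Phi := by
  intro x y hxy
  have h := measure_mono (Set.Iic_subset_Iic.2 hxy) (μ := gaussianReal 0 1)
  rw [std_Iic, std_Iic, ENNReal.ofReal_le_ofReal_iff (Phi_pos y).le] at h
  exact h

lemma std_map_affine {σ : ℝ} (hσ : 0 < σ) (u : ℝ) :
    Measure.map (fun x => σ * x + u) (gaussianReal 0 1) = gaussianReal u (σ ^ 2).toNNReal := by
  have : (fun x : ℝ => σ * x + u) = (· + u) ∘ (σ * ·) := rfl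
  rw [this, ← Measure.map_map (measurable_id'.add_const u) (measurable_id'.const_mul σ),
    gaussianReal_map_const_mul, gaussianReal_map_add_const]
  congr 1
  · ring
  · ext
    simp [Real.coe_toNNReal _ (sq_nonneg σ)]

lemma gauss_Iic {σ : ℝ} (hσ : 0 < σ) (u b : ℝ) :
    gaussianReal u (σ ^ 2).toNNReal (Set.Iic b) = ENNReal.ofReal (Phi ((b - u) / σ)) := by
  rw [← std_map_affine hσ u,
    Measure.map_apply (by fun_prop) measurableSet_Iic]
  have : (fun x : ℝ => σ * x + u) ⁻¹' Set.Iic b = Set.Iic ((b - u) / σ) := by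
    ext x
    simp only [Set.mem_preimage, Set.mem_Iic]
    rw [le_div_iff₀ hσ]
    constructor <;> intro h <;> nlinarith
  rw [this, std_Iic]

lemma std_neg : Measure.map (fun x : ℝ => -x) (gaussianReal 0 1) = gaussianReal 0 1 := by
  have : (fun x : ℝ => -x) = ((-1 : ℝ) * ·) := by ext x; ring
  rw [this, gaussianReal_map_const_mul]
  congr 1
  · ring
  · ext
    norm_num

lemma std_Ici (y : ℝ) :
    gaussianReal 0 1 (Set.Ici y) = ENNReal.ofReal (Phi (-y)) := by
  conv_lhs => rw [← std_neg]
  rw [Measure.map_apply measurable_neg measurableSet_Ici]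
  have : (fun x : ℝ => -x) ⁻¹' Set.Ici y = Set.Iic (-y) := by
    ext x; simp only [Set.mem_preimage, Set.mem_Ici, Set.mem_Iic]; constructor <;> intro <;> linarith
  rw [this, std_Iic]

lemma gauss_Ici {σ : ℝ} (hσ : 0 < σ) (u b : ℝ) :
    gaussianReal u (σ ^ 2).toNNReal (Set.Ici b) = ENNReal.ofReal (Phi ((u - b) / σ)) := by
  rw [← std_map_affine hσ u,
    Measure.map_apply (by fun_prop) measurableSet_Ici]
  have : (fun x : ℝ => σ * x + u) ⁻¹' Set.Ici b = Set.Ici ((b - u) / σ) := by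
    ext x
    simp only [Set.mem_preimage, Set.mem_Ici]
    rw [div_le_iff₀ hσ]
    constructor <;> intro h <;> nlinarith
  rw [this, std_Ici]
  congr 2
  ring

lemma gauss_Ioo {σ a : ℝ} (hσ : 0 < σ) (ha : 0 < a) (u : ℝ) :
    gaussianReal u (σ ^ 2).toNNReal (Set.Ioo (-a) a) = ENNReal.ofReal (Δ a σ u) := by
  have hv : (σ ^ 2).toNNReal ≠ 0 := by
    simp only [ne_eq, Real.toNNReal_eq_zero, not_le]
    positivity
  have hsingleton : gaussianReal u (σ ^ 2).toNNReal {a} = 0 :=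
    gaussianReal_absolutelyContinuous u hv (measure_singleton a)
  have h1 : Set.Ioo (-a) a = Set.Iio a \ Set.Iic (-a) := by
    ext x; simp only [Set.mem_Ioo, Set.mem_diff, Set.mem_Iio, Set.mem_Iic]
    constructor
    · rintro ⟨h1, h2⟩; exact ⟨h2, by linarith⟩
    · rintro ⟨h1, h2⟩; exact ⟨by linarith, h1⟩
  have h2 : Set.Iio a = Set.Iic a \ {a} := (Set.Iic_diff_right).symm
  rw [h1, measure_diff (Set.Iic_subset_Iio.2 (by linarith)) measurableSet_Iic.nullMeasurableSet
      (measure_ne_top _ _), h2, measure_diff_null hsingleton, gauss_Iic hσ, gauss_Iic hσ, Δ,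
    ← ENNReal.ofReal_sub _ (Phi_pos _).le]

/-- The density of the rectified Gaussian `N^R(θ,σ²)` w.r.t. `N^R(θ+c,σ²)`. -/
noncomputable def hdens (σ a θ c : ℝ) (x : ℝ) : ℝ :=
  if x = -a then Phi ((-a - θ) / σ) / Phi ((-a - θ - c) / σ)
  else if x = a then Phi ((θ - a) / σ) / Phi ((θ + c - a) / σ)
  else Real.exp (((x - θ - c) ^ 2 - (x - θ) ^ 2) / (2 * σ ^ 2))

lemma hdens_meas (σ a θ c : ℝ) : Measurable (hdens σ a θ c) := by
  unfold hdens
  exact Measurable.ite (measurableSet_eq) measurable_const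
    (Measurable.ite (measurableSet_eq) measurable_const (by fun_prop))

lemma hdens_pos (σ a θ c x : ℝ) : 0 < hdens σ a θ c x := by
  unfold hdens
  split_ifs
  · exact div_pos (Phi_pos _) (Phi_pos _)
  · exact div_pos (Phi_pos _) (Phi_pos _)
  · exact Real.exp_pos _

lemma hdens_pow_meas (σ a θ c α : ℝ) : Measurable fun x => hdens σ a θ c x ^ α := by
  have h : (fun x => hdens σ a θ c x ^ α)
      = fun x => Real.exp (Real.log (hdens σ a θ c x) * α) := by
    funext x
    rw [Real.rpow_def_of_pos (hdens_pos σ a θ c x)]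
  rw [h]
  exact (((Real.measurable_log.comp (hdens_meas σ a θ c)).mul_const α).exp)

lemma hdens_nonneg (σ a θ c x : ℝ) : 0 ≤ hdens σ a θ c x := by
  unfold hdens
  split_ifs
  · exact div_nonneg (Phi_pos _).le (Phi_pos _).le
  · exact div_nonneg (Phi_pos _).le (Phi_pos _).le
  · exact (Real.exp_pos _).le

lemma coe_var {σ : ℝ} (hσ : 0 < σ) : (((σ ^ 2).toNNReal : ℝ≥0) : ℝ) = σ ^ 2 :=
  Real.coe_toNNReal _ (sq_nonneg σ)

lemma var_ne_zero {σ : ℝ} (hσ : 0 < σ) : (σ ^ 2).toNNReal ≠ 0 := by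
  simp only [ne_eq, Real.toNNReal_eq_zero, not_le]
  positivity

lemma pdf_ratio {σ : ℝ} (hσ : 0 < σ) (θ c x : ℝ) :
    Real.exp (((x - θ - c) ^ 2 - (x - θ) ^ 2) / (2 * σ ^ 2)) *
      gaussianPDFReal (θ + c) (σ ^ 2).toNNReal x = gaussianPDFReal θ (σ ^ 2).toNNReal x := by
  simp only [gaussianPDFReal]
  rw [coe_var hσ, mul_comm (Real.exp _), mul_assoc, ← Real.exp_add]
  congr 1
  have h2 : (2 : ℝ) * σ ^ 2 ≠ 0 := by positivity
  field_simp
  ring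

lemma pdf_pow {σ : ℝ} (hσ : 0 < σ) (α θ c x : ℝ) :
    Real.exp (((x - θ - c) ^ 2 - (x - θ) ^ 2) / (2 * σ ^ 2)) ^ α *
      gaussianPDFReal (θ + c) (σ ^ 2).toNNReal x =
    Real.exp ((α ^ 2 - α) * c ^ 2 / (2 * σ ^ 2)) *
      gaussianPDFReal (θ + (1 - α) * c) (σ ^ 2).toNNReal x := by
  simp only [gaussianPDFReal]
  rw [coe_var hσ, ← Real.exp_mul, mul_left_comm, ← Real.exp_add]
  conv_rhs => rw [mul_left_comm, ← Real.exp_add]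
  congr 1
  have h2 : (2 : ℝ) * σ ^ 2 ≠ 0 := by positivity
  field_simp
  ring

section main

variable {σ a : ℝ}

lemma f_eq1 (ha : 0 < a) {x : ℝ} (hx : x ≤ -a) : max (-a) (min a x) = -a := by
  rw [min_eq_right (by linarith), max_eq_left hx]

lemma f_eq2 {x : ℝ} (hx : x ∈ Set.Ioo (-a) a) : max (-a) (min a x) = x := by
  rw [min_eq_right hx.2.le, max_eq_right hx.1.le]

lemma f_eq3 (ha : 0 < a) {x : ℝ} (hx : a ≤ x) : max (-a) (min a x) = a := by
  rw [min_eq_left hx, max_eq_right (by linarith)]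

lemma f_meas : Measurable (fun x : ℝ => max (-a) (min a x)) := by fun_prop

lemma lintegral_split (ha : 0 < a) (ρ : Measure ℝ) (g : ℝ → ℝ≥0∞) (B : Set ℝ)
    (hB : MeasurableSet B) :
    ∫⁻ x in B, g x ∂ρ = ∫⁻ x in B ∩ Set.Iic (-a), g x ∂ρ +
      ∫⁻ x in B ∩ Set.Ioo (-a) a, g x ∂ρ + ∫⁻ x in B ∩ Set.Ici a, g x ∂ρ := by
  have hcover : (Set.Iic (-a) ∪ Set.Ioo (-a) a) ∪ Set.Ici a = Set.univ := by
    ext x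
    simp only [Set.mem_union, Set.mem_Iic, Set.mem_Ioo, Set.mem_Ici, Set.mem_univ, iff_true]
    by_cases h1 : x ≤ -a
    · exact Or.inl (Or.inl h1)
    · by_cases h2 : a ≤ x
      · exact Or.inr h2
      · exact Or.inl (Or.inr ⟨lt_of_not_ge h1, lt_of_not_ge h2⟩)
  have hd1 : Disjoint (B ∩ Set.Iic (-a)) (B ∩ Set.Ioo (-a) a) := by
    refine Set.disjoint_left.2 ?_
    rintro x ⟨-, h1⟩ ⟨-, h2⟩
    exact absurd h2.1 (not_lt.2 h1)
  have hd2 : Disjoint ((B ∩ Set.Iic (-a)) ∪ (B ∩ Set.Ioo (-a) a)) (B ∩ Set.Ici a) := by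
    refine Set.disjoint_left.2 ?_
    rintro x (⟨-, h1⟩ | ⟨-, h1⟩) ⟨-, h2⟩
    · simp only [Set.mem_Iic] at h1; linarith [Set.mem_Ici.1 h2]
    · exact absurd h2 (not_le.2 h1.2)
  conv_lhs => rw [← Set.inter_univ B, ← hcover, Set.inter_union_distrib_left,
    Set.inter_union_distrib_left]
  rw [lintegral_union (hB.inter measurableSet_Ici) hd2,
    lintegral_union (hB.inter measurableSet_Ioo) hd1]

lemma measure_split (ha : 0 < a) (ρ : Measure ℝ) (B : Set ℝ) (hB : MeasurableSet B) :
    ρ B = ρ (B ∩ Set.Iic (-a)) + ρ (B ∩ Set.Ioo (-a) a) + ρ (B ∩ Set.Ici a) := by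
  have := lintegral_split ha ρ (fun _ => 1) B hB
  simpa [setLIntegral_one] using this

end main

lemma mu_eq {σ a : ℝ} (hσ : 0 < σ) (ha : 0 < a) (θ c : ℝ) :
    Measure.map (fun x : ℝ => max (-a) (min a x)) (gaussianReal θ (σ ^ 2).toNNReal) =
      (Measure.map (fun x : ℝ => max (-a) (min a x))
          (gaussianReal (θ + c) (σ ^ 2).toNNReal)).withDensity
        (fun x => ENNReal.ofReal (hdens σ a θ c x)) := by
  have hv := var_ne_zero hσ
  ext s hs
  rw [Measure.map_apply f_meas hs, withDensity_apply _ hs,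
    setLIntegral_map hs ((hdens_meas σ a θ c).ennreal_ofReal) f_meas,
    measure_split ha _ _ (f_meas hs), lintegral_split ha _ _ _ (f_meas hs)]
  congr 1
  congr 1
  · -- left piece
    by_cases hm : (-a) ∈ s
    · have hset : (fun x : ℝ => max (-a) (min a x)) ⁻¹' s ∩ Set.Iic (-a) = Set.Iic (-a) := by
        ext x
        exact ⟨fun h => h.2, fun h => ⟨by simp only [Set.mem_preimage, f_eq1 ha h]; exact hm, h⟩⟩
      rw [hset]
      have e1 : (∫⁻ x in Set.Iic (-a),
            ENNReal.ofReal (hdens σ a θ c (max (-a) (min a x)))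
            ∂(gaussianReal (θ + c) (σ ^ 2).toNNReal))
          = ∫⁻ _ in Set.Iic (-a),
            ENNReal.ofReal (Phi ((-a - θ) / σ) / Phi ((-a - θ - c) / σ))
            ∂(gaussianReal (θ + c) (σ ^ 2).toNNReal) :=
        setLIntegral_congr_fun measurableSet_Iic (fun x hx => by
          rw [f_eq1 ha hx]; simp [hdens])
      rw [e1, setLIntegral_const, gauss_Iic hσ, gauss_Iic hσ,
        ← ENNReal.ofReal_mul (div_nonneg (Phi_pos _).le (Phi_pos _).le)]
      congr 1
      rw [show (-a - (θ + c)) / σ = (-a - θ - c) / σ by ring,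
        div_mul_cancel₀ _ (Phi_pos _).ne']
    · have hset : (fun x : ℝ => max (-a) (min a x)) ⁻¹' s ∩ Set.Iic (-a) = ∅ := by
        ext x
        simp only [Set.mem_inter_iff, Set.mem_preimage, Set.mem_Iic, Set.mem_empty_iff_false,
          iff_false, not_and]
        intro h1 h2
        rw [f_eq1 ha h2] at h1
        exact hm h1
      rw [hset]
      simp
  · -- middle piece
    have hset : (fun x : ℝ => max (-a) (min a x)) ⁻¹' s ∩ Set.Ioo (-a) a
        = s ∩ Set.Ioo (-a) a := by
      ext x
      constructor
      · rintro ⟨h1, h2⟩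
        rw [Set.mem_preimage, f_eq2 h2] at h1
        exact ⟨h1, h2⟩
      · rintro ⟨h1, h2⟩
        exact ⟨by rw [Set.mem_preimage, f_eq2 h2]; exact h1, h2⟩
    have hms : MeasurableSet (s ∩ Set.Ioo (-a) a) := hs.inter measurableSet_Ioo
    rw [hset]
    have e1 : (∫⁻ x in s ∩ Set.Ioo (-a) a,
          ENNReal.ofReal (hdens σ a θ c (max (-a) (min a x)))
          ∂(gaussianReal (θ + c) (σ ^ 2).toNNReal))
        = ∫⁻ x in s ∩ Set.Ioo (-a) a,
          ENNReal.ofReal (Real.exp (((x - θ - c) ^ 2 - (x - θ) ^ 2) / (2 * σ ^ 2)))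
          ∂(gaussianReal (θ + c) (σ ^ 2).toNNReal) :=
      setLIntegral_congr_fun hms (fun x hx => by
        rw [f_eq2 hx.2]
        simp only [hdens, if_neg hx.2.1.ne', if_neg hx.2.2.ne])
    rw [e1, gaussianReal_apply θ hv, gaussianReal_of_var_ne_zero (θ + c) hv,
      restrict_withDensity hms,
      lintegral_withDensity_eq_lintegral_mul _ (measurable_gaussianPDF _ _)
        (by fun_prop : Measurable fun x : ℝ =>
          ENNReal.ofReal (Real.exp (((x - θ - c) ^ 2 - (x - θ) ^ 2) / (2 * σ ^ 2))))]
    refine lintegral_congr fun x => ?_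
    simp only [Pi.mul_apply, gaussianPDF]
    rw [← ENNReal.ofReal_mul (gaussianPDFReal_nonneg _ _ _)]
    congr 1
    rw [mul_comm]
    exact (pdf_ratio hσ θ c x).symm
  · -- right piece
    by_cases hm : a ∈ s
    · have hset : (fun x : ℝ => max (-a) (min a x)) ⁻¹' s ∩ Set.Ici a = Set.Ici a := by
        ext x
        exact ⟨fun h => h.2, fun h => ⟨by simp only [Set.mem_preimage, f_eq3 ha h]; exact hm, h⟩⟩
      rw [hset]
      have e1 : (∫⁻ x in Set.Ici a,
            ENNReal.ofReal (hdens σ a θ c (max (-a) (min a x)))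
            ∂(gaussianReal (θ + c) (σ ^ 2).toNNReal))
          = ∫⁻ _ in Set.Ici a,
            ENNReal.ofReal (Phi ((θ - a) / σ) / Phi ((θ + c - a) / σ))
            ∂(gaussianReal (θ + c) (σ ^ 2).toNNReal) :=
        setLIntegral_congr_fun measurableSet_Ici (fun x hx => by
          rw [f_eq3 ha hx]
          simp [hdens, (by linarith : ¬(a = -a))])
      rw [e1, setLIntegral_const, gauss_Ici hσ, gauss_Ici hσ,
        ← ENNReal.ofReal_mul (div_nonneg (Phi_pos _).le (Phi_pos _).le)]
      congr 1
      rw [div_mul_cancel₀ _ (Phi_pos _).ne']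
    · have hset : (fun x : ℝ => max (-a) (min a x)) ⁻¹' s ∩ Set.Ici a = ∅ := by
        ext x
        simp only [Set.mem_inter_iff, Set.mem_preimage, Set.mem_Ici, Set.mem_empty_iff_false,
          iff_false, not_and]
        intro h1 h2
        rw [f_eq3 ha h2] at h1
        exact hm h1
      rw [hset]
      simp

lemma rpow_div_mul {p q : ℝ} (α : ℝ) (hp : 0 < p) (hq : 0 < q) :
    (p / q) ^ α * q = p ^ α * q ^ (1 - α) := by
  rw [Real.div_rpow hp.le hq.le, Real.rpow_sub hq, Real.rpow_one]
  ring

lemma delta_nonneg {σ a : ℝ} (hσ : 0 < σ) (ha : 0 < a) (u : ℝ) : 0 ≤ Δ a σ u := by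
  rw [Δ, sub_nonneg]
  apply Phi_mono
  exact (div_le_div_iff_of_pos_right hσ).mpr (by linarith)

lemma main_lintegral {α σ a : ℝ} (hσ : 0 < σ) (ha : 0 < a) (θ c : ℝ) :
    ∫⁻ x, ENNReal.ofReal (hdens σ a θ c x ^ α)
      ∂(Measure.map (fun x : ℝ => max (-a) (min a x)) (gaussianReal (θ + c) (σ ^ 2).toNNReal))
    = ENNReal.ofReal (Real.exp ((α ^ 2 - α) * c ^ 2 / (2 * σ ^ 2)) * Δ a σ (θ + (1 - α) * c) +
        Phi ((-a - θ) / σ) ^ α * Phi ((-a - θ - c) / σ) ^ (1 - α) +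
        Phi ((θ - a) / σ) ^ α * Phi ((θ + c - a) / σ) ^ (1 - α)) := by
  have hv := var_ne_zero hσ
  rw [lintegral_map ((hdens_pow_meas σ a θ c α).ennreal_ofReal) f_meas,
    ← setLIntegral_univ, lintegral_split ha _ _ _ MeasurableSet.univ]
  simp only [Set.univ_inter]
  have e1 : (∫⁻ x in Set.Iic (-a),
        ENNReal.ofReal (hdens σ a θ c (max (-a) (min a x)) ^ α)
        ∂(gaussianReal (θ + c) (σ ^ 2).toNNReal))
      = ENNReal.ofReal (Phi ((-a - θ) / σ) ^ α * Phi ((-a - θ - c) / σ) ^ (1 - α)) := by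
    rw [setLIntegral_congr_fun measurableSet_Iic (fun x (hx : x ∈ Set.Iic (-a)) =>
        (by rw [f_eq1 ha hx]; simp [hdens] :
          ENNReal.ofReal (hdens σ a θ c (max (-a) (min a x)) ^ α) =
          ENNReal.ofReal ((Phi ((-a - θ) / σ) / Phi ((-a - θ - c) / σ)) ^ α))),
      setLIntegral_const, gauss_Iic hσ,
      ← ENNReal.ofReal_mul (Real.rpow_nonneg (div_nonneg (Phi_pos _).le (Phi_pos _).le) α),
      show (-a - (θ + c)) / σ = (-a - θ - c) / σ by ring,
      rpow_div_mul α (Phi_pos _) (Phi_pos _)]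
  have e3 : (∫⁻ x in Set.Ici a,
        ENNReal.ofReal (hdens σ a θ c (max (-a) (min a x)) ^ α)
        ∂(gaussianReal (θ + c) (σ ^ 2).toNNReal))
      = ENNReal.ofReal (Phi ((θ - a) / σ) ^ α * Phi ((θ + c - a) / σ) ^ (1 - α)) := by
    rw [setLIntegral_congr_fun measurableSet_Ici (fun x (hx : x ∈ Set.Ici a) =>
        (by rw [f_eq3 ha hx]; simp [hdens, (by linarith : ¬(a = -a))] :
          ENNReal.ofReal (hdens σ a θ c (max (-a) (min a x)) ^ α) =
          ENNReal.ofReal ((Phi ((θ - a) / σ) / Phi ((θ + c - a) / σ)) ^ α))),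
      setLIntegral_const, gauss_Ici hσ,
      ← ENNReal.ofReal_mul (Real.rpow_nonneg (div_nonneg (Phi_pos _).le (Phi_pos _).le) α),
      show (θ + c - a) / σ = (θ + c - a) / σ from rfl,
      rpow_div_mul α (Phi_pos _) (Phi_pos _)]
  have e2 : (∫⁻ x in Set.Ioo (-a) a,
        ENNReal.ofReal (hdens σ a θ c (max (-a) (min a x)) ^ α)
        ∂(gaussianReal (θ + c) (σ ^ 2).toNNReal))
      = ENNReal.ofReal (Real.exp ((α ^ 2 - α) * c ^ 2 / (2 * σ ^ 2)) *
          Δ a σ (θ + (1 - α) * c)) := by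
    rw [setLIntegral_congr_fun measurableSet_Ioo (fun x (hx : x ∈ Set.Ioo (-a) a) =>
        (by rw [f_eq2 hx]
            simp only [hdens, if_neg hx.1.ne', if_neg hx.2.ne] :
          ENNReal.ofReal (hdens σ a θ c (max (-a) (min a x)) ^ α) =
          ENNReal.ofReal (Real.exp (((x - θ - c) ^ 2 - (x - θ) ^ 2) / (2 * σ ^ 2)) ^ α))),
      gaussianReal_of_var_ne_zero (θ + c) hv, restrict_withDensity measurableSet_Ioo,
      lintegral_withDensity_eq_lintegral_mul _ (measurable_gaussianPDF _ _)
        (by fun_prop : Measurable fun x : ℝ =>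
          ENNReal.ofReal (Real.exp (((x - θ - c) ^ 2 - (x - θ) ^ 2) / (2 * σ ^ 2)) ^ α))]
    have key : ∀ x : ℝ, (gaussianPDF (θ + c) (σ ^ 2).toNNReal *
          fun x : ℝ =>
            ENNReal.ofReal (Real.exp (((x - θ - c) ^ 2 - (x - θ) ^ 2) / (2 * σ ^ 2)) ^ α)) x
        = ENNReal.ofReal (Real.exp ((α ^ 2 - α) * c ^ 2 / (2 * σ ^ 2))) *
          gaussianPDF (θ + (1 - α) * c) (σ ^ 2).toNNReal x := by
      intro x
      simp only [Pi.mul_apply, gaussianPDF]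
      rw [← ENNReal.ofReal_mul (gaussianPDFReal_nonneg _ _ _),
        ← ENNReal.ofReal_mul (Real.exp_pos _).le]
      congr 1
      rw [mul_comm]
      exact pdf_pow hσ α θ c x
    rw [lintegral_congr key, lintegral_const_mul _ (measurable_gaussianPDF _ _),
      ← gaussianReal_apply _ hv, gauss_Ioo hσ ha,
      ← ENNReal.ofReal_mul (Real.exp_pos _).le]
  have hP1 : 0 ≤ Phi ((-a - θ) / σ) ^ α * Phi ((-a - θ - c) / σ) ^ (1 - α) :=
    mul_nonneg (Real.rpow_nonneg (Phi_pos _).le _) (Real.rpow_nonneg (Phi_pos _).le _)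
  have hP2 : 0 ≤ Phi ((θ - a) / σ) ^ α * Phi ((θ + c - a) / σ) ^ (1 - α) :=
    mul_nonneg (Real.rpow_nonneg (Phi_pos _).le _) (Real.rpow_nonneg (Phi_pos _).le _)
  have hK : 0 ≤ Real.exp ((α ^ 2 - α) * c ^ 2 / (2 * σ ^ 2)) * Δ a σ (θ + (1 - α) * c) :=
    mul_nonneg (Real.exp_pos _).le (delta_nonneg hσ ha _)
  rw [e1, e2, e3, ← ENNReal.ofReal_add hP1 hK, ← ENNReal.ofReal_add (by linarith) hP2]
  congr 1
  ring

/-- Closed form for the Rényi divergence of order `α` between the rectified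
Gaussians `N^R(θ, σ², [−a,a])` and `N^R(θ+c, σ², [−a,a])`, realized as
pushforwards of Gaussian measures under clamping to `[−a, a]`. -/
theorem rectified_gaussian_renyi_divergence (α σ a θ c : ℝ)
    (hα : 1 < α) (hσ : 0 < σ) (ha : 0 < a) :
    (Measure.map (fun x : ℝ => max (-a) (min a x)) (gaussianReal θ (σ ^ 2).toNNReal)) ≪
        (Measure.map (fun x : ℝ => max (-a) (min a x)) (gaussianReal (θ + c) (σ ^ 2).toNNReal)) ∧
      (1 / (α - 1)) *
          Real.log (∫ x,
            ((Measure.rnDeriv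
                (Measure.map (fun x : ℝ => max (-a) (min a x)) (gaussianReal θ (σ ^ 2).toNNReal))
                (Measure.map (fun x : ℝ => max (-a) (min a x))
                  (gaussianReal (θ + c) (σ ^ 2).toNNReal)) x).toReal) ^ α
            ∂(Measure.map (fun x : ℝ => max (-a) (min a x))
                (gaussianReal (θ + c) (σ ^ 2).toNNReal))) =
        (1 / (α - 1)) *
          Real.log (Real.exp ((α ^ 2 - α) * c ^ 2 / (2 * σ ^ 2)) * Δ a σ (θ + (1 - α) * c) +
            Phi ((-a - θ) / σ) ^ α * Phi ((-a - θ - c) / σ) ^ (1 - α) +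
            Phi ((θ - a) / σ) ^ α * Phi ((θ + c - a) / σ) ^ (1 - α)) := by
  have hmu := mu_eq hσ ha θ c
  set ν := Measure.map (fun x : ℝ => max (-a) (min a x))
    (gaussianReal (θ + c) (σ ^ 2).toNNReal) with hν
  haveI : IsProbabilityMeasure ν := Measure.isProbabilityMeasure_map f_meas.aemeasurable
  refine ⟨by rw [hmu]; exact withDensity_absolutelyContinuous _ _, ?_⟩
  have hrn : (Measure.map (fun x : ℝ => max (-a) (min a x))
        (gaussianReal θ (σ ^ 2).toNNReal)).rnDeriv ν
      =ᵐ[ν] fun x => ENNReal.ofReal (hdens σ a θ c x) := by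
    rw [hmu]
    exact Measure.rnDeriv_withDensity _ ((hdens_meas σ a θ c).ennreal_ofReal)
  have hI : (∫ x,
        ((Measure.rnDeriv
          (Measure.map (fun x : ℝ => max (-a) (min a x)) (gaussianReal θ (σ ^ 2).toNNReal))
          ν x).toReal) ^ α ∂ν)
      = Real.exp ((α ^ 2 - α) * c ^ 2 / (2 * σ ^ 2)) * Δ a σ (θ + (1 - α) * c) +
          Phi ((-a - θ) / σ) ^ α * Phi ((-a - θ - c) / σ) ^ (1 - α) +
          Phi ((θ - a) / σ) ^ α * Phi ((θ + c - a) / σ) ^ (1 - α) := by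
    have h1 : (∫ x,
          ((Measure.rnDeriv
            (Measure.map (fun x : ℝ => max (-a) (min a x)) (gaussianReal θ (σ ^ 2).toNNReal))
            ν x).toReal) ^ α ∂ν) = ∫ x, hdens σ a θ c x ^ α ∂ν :=
      integral_congr_ae (hrn.mono fun x hx => by
        simp only [hx, ENNReal.toReal_ofReal (hdens_nonneg σ a θ c x)])
    rw [h1, integral_eq_lintegral_of_nonneg_ae
        (ae_of_all _ fun x => Real.rpow_nonneg (hdens_nonneg σ a θ c x) α)
        (hdens_pow_meas σ a θ c α).aestronglyMeasurable,
      hν, main_lintegral hσ ha θ c, ENNReal.toReal_ofReal]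
    have hP1 : 0 ≤ Phi ((-a - θ) / σ) ^ α * Phi ((-a - θ - c) / σ) ^ (1 - α) :=
      mul_nonneg (Real.rpow_nonneg (Phi_pos _).le _) (Real.rpow_nonneg (Phi_pos _).le _)
    have hP2 : 0 ≤ Phi ((θ - a) / σ) ^ α * Phi ((θ + c - a) / σ) ^ (1 - α) :=
      mul_nonneg (Real.rpow_nonneg (Phi_pos _).le _) (Real.rpow_nonneg (Phi_pos _).le _)
    have hK : 0 ≤ Real.exp ((α ^ 2 - α) * c ^ 2 / (2 * σ ^ 2)) * Δ a σ (θ + (1 - α) * c) :=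
      mul_nonneg (Real.exp_pos _).le (delta_nonneg hσ ha _)
    linarith
  rw [hI]
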